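/- Let f : ℝ^n → ℝ be differentiable and monotone on ℝ₊^n with antitone gradient (monotone DR-submodular), let x, y ∈ ℝ₊^n. Then f(x ∨ y) ≤ f(x) + ⟨∇f(x), (y - x) ∨ 0⟩, where ∨ denotes the componentwise maximum and (y - x) ∨ 0 the componentwise positive part. -/

import Mathlib

open RealInnerProductSpace

theorem stmt_17 (n : ℕ) (f : EuclideanSpace ℝ (Fin n) → ℝ)
    (hdiff : Differentiable ℝ f)
    (hmono : ∀ x y : EuclideanSpace ℝ (Fin n), (∀ i, 0 ≤ x i) → (∀ i, 0 ≤ y i) →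
      (∀ i, x i ≤ y i) → f x ≤ f y)
    (hDR : ∀ x y : EuclideanSpace ℝ (Fin n), (∀ i, 0 ≤ x i) → (∀ i, 0 ≤ y i) →
      (∀ i, x i ≤ y i) → ∀ i, gradient f y i ≤ gradient f x i)
    (x y : EuclideanSpace ℝ (Fin n)) (hx : ∀ i, 0 ≤ x i) (hy : ∀ i, 0 ≤ y i)
    (m v : EuclideanSpace ℝ (Fin n))
    (hm : ∀ i, m i = max (x i) (y i)) (hv : ∀ i, v i = max (y i - x i) 0) :
    f m ≤ f x + ⟪gradient f x, v⟫ := by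
  have hv0 : ∀ i, 0 ≤ v i := fun i => (hv i).symm ▸ le_max_right _ _
  have hm' : m = x + v := by
    ext i
    rw [show (x + v) i = x i + v i from rfl, hm i, hv i]
    rcases le_total (y i) (x i) with h | h
    · rw [max_eq_left h, max_eq_right (sub_nonpos.mpr h), add_zero]
    · rw [max_eq_right h, max_eq_left (sub_nonneg.mpr h)]; ring
  have key : ∀ z : EuclideanSpace ℝ (Fin n), ⟪gradient f z, v⟫ = fderiv ℝ f z v := by
    intro z
    rw [gradient, InnerProductSpace.toDual_symm_apply]
  set g : ℝ → ℝ := fun t => f (x + t • v) with hg_def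
  have hg : ∀ t : ℝ, HasDerivAt g (fderiv ℝ f (x + t • v) v) t := by
    intro t
    have hc : HasDerivAt (fun t : ℝ => x + t • v) v t := by
      simpa using ((hasDerivAt_id t).smul_const v).const_add x
    exact (hdiff (x + t • v)).hasFDerivAt.comp_hasDerivAt t hc
  obtain ⟨c, hc01, hceq⟩ := exists_hasDerivAt_eq_slope g
    (fun t => fderiv ℝ f (x + t • v) v) one_pos
    (fun t _ => (hg t).continuousAt.continuousWithinAt) (fun t _ => hg t)
  have hc0 : (0:ℝ) ≤ c := hc01.1.le
  have hgrad_le : fderiv ℝ f (x + c • v) v ≤ fderiv ℝ f x v := by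
    rw [← key, ← key]
    have hcomp : ∀ i, gradient f (x + c • v) i ≤ gradient f x i := by
      refine hDR x (x + c • v) hx (fun i => ?_) (fun i => ?_)
      · exact add_nonneg (hx i) (mul_nonneg hc0 (hv0 i))
      · exact le_add_of_nonneg_right (mul_nonneg hc0 (hv0 i))
    rw [PiLp.inner_apply, PiLp.inner_apply]
    refine Finset.sum_le_sum fun i _ => ?_
    simp only [RCLike.inner_apply, conj_trivial]
    exact mul_le_mul_of_nonneg_left (hcomp i) (hv0 i)
  have hg1 : g 1 = f m := by rw [hg_def]; simp [hm']
  have hg0 : g 0 = f x := by rw [hg_def]; simp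
  have : g 1 - g 0 = fderiv ℝ f (x + c • v) v := by
    rw [hceq]; ring
  rw [key]
  linarith [hgrad_le, this, hg1.symm ▸ hg0.symm ▸ this]
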